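/- arXiv:1505.00086 — 4 statements merged into one kernel-verified Lean document; each statement's English description precedes it below -/
import Mathlib

section
/- Suppose w : [t₀,T) → ℝ is absolutely continuous, C > 0, ε ∈ (0, 1/2), w(t₀) < -√(C² + C²/ε), w satisfies -w² - C² ≤ w'(t) ≤ -w² + C² a.e., and w(t) → -∞ as t → T. Then for all t ∈ [t₀,T): (-1-ε)(T-t) ≤ 1/w(t) ≤ (-1+ε)(T-t). -/
open MeasureTheory Filter

/- STATEMENT 4: two-sided Riccati inequality near blow-up. -/
set_option maxHeartbeats 1000000 in
theorem stmt4 (t₀ T C ε : ℝ) (ht : t₀ < T) (hC : 0 < C) (hε : ε ∈ Set.Ioo (0:ℝ) (1/2))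
    (w w' : ℝ → ℝ)
    (hw : ∀ t ∈ Set.Ico t₀ T, HasDerivWithinAt w (w' t) (Set.Ico t₀ T) t)
    (h0 : w t₀ < -Real.sqrt (C ^ 2 + C ^ 2 / ε))
    (hub : ∀ᵐ t ∂volume, t ∈ Set.Ioo t₀ T → |w' t + (w t) ^ 2| ≤ C ^ 2)
    (hblow : Tendsto w (nhdsWithin T (Set.Iio T)) atBot) :
    ∀ t ∈ Set.Ico t₀ T,
      (-1 - ε) * (T - t) ≤ 1 / w t ∧ 1 / w t ≤ (-1 + ε) * (T - t) := by
  obtain ⟨hε0, hε2⟩ := hε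
  set M := Real.sqrt (C ^ 2 + C ^ 2 / ε) with hMdef
  have hM2 : M ^ 2 = C ^ 2 + C ^ 2 / ε := Real.sq_sqrt (by positivity)
  have hMpos : 0 < M := Real.sqrt_pos.2 (by positivity)
  have hCM : C ^ 2 ≤ M ^ 2 := by
    rw [hM2]; nlinarith [div_nonneg (sq_nonneg C) hε0.le]
  clear_value M
  -- derivative at interior points
  have hD : ∀ x ∈ Set.Ioo t₀ T, HasDerivAt w (w' x) x := by
    intro x hx
    exact (hw x ⟨hx.1.le, hx.2⟩).hasDerivAt
      (Filter.mem_of_superset (Ioo_mem_nhds hx.1 hx.2) Set.Ioo_subset_Ico_self)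
  have hcont : ContinuousOn w (Set.Ico t₀ T) := fun x hx => (hw x hx).continuousWithinAt
  -- integrability of w' on subintervals
  have hW'int : ∀ a b, t₀ ≤ a → a < b → b < T → IntervalIntegrable w' volume a b := by
    intro a b ha hab hbT
    rw [intervalIntegrable_iff_integrableOn_Ioc_of_le hab.le]
    have hsub : Set.Ioc a b ⊆ Set.Ioo t₀ T := fun x hx =>
      ⟨lt_of_le_of_lt ha hx.1, lt_of_le_of_lt hx.2 hbT⟩
    have hsub' : Set.Icc a b ⊆ Set.Ico t₀ T := fun x hx =>
      ⟨ha.trans hx.1, lt_of_le_of_lt hx.2 hbT⟩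
    obtain ⟨K, hK⟩ := isCompact_Icc.exists_bound_of_continuousOn (hcont.mono hsub')
    have heq : ∀ x ∈ Set.Ioc a b, deriv w x = w' x := fun x hx => (hD x (hsub hx)).deriv
    have haem : AEStronglyMeasurable w' (volume.restrict (Set.Ioc a b)) := by
      refine (measurable_deriv w).aestronglyMeasurable.restrict.congr ?_
      exact (ae_restrict_iff' measurableSet_Ioc).2 (ae_of_all _ heq)
    refine Integrable.mono' (integrable_const (C ^ 2 + K ^ 2)) haem ?_
    filter_upwards [ae_restrict_of_ae hub, ae_restrict_mem measurableSet_Ioc] with x h1 h2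
    have hx := hsub h2
    have hKx : |w x| ≤ K := by
      have := hK x ⟨h2.1.le, h2.2⟩; simpa [Real.norm_eq_abs] using this
    have h3 := abs_le.1 (h1 hx)
    have h4 : (w x) ^ 2 ≤ K ^ 2 := by nlinarith [abs_nonneg (w x), sq_abs (w x), abs_le.1 hKx]
    rw [Real.norm_eq_abs, abs_le]
    constructor <;> nlinarith [sq_nonneg (w x)]
  -- Step 1: w stays below -M
  have key : ∀ t ∈ Set.Ico t₀ T, w t < -M := by
    by_contra h
    push_neg at h
    obtain ⟨s, hs, hws⟩ := h
    set K := Set.Icc t₀ s ∩ w ⁻¹' Set.Ici (-M) with hKdef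
    have hKs : s ∈ K := ⟨⟨hs.1, le_refl s⟩, hws⟩
    have hKbdd : BddBelow K := ⟨t₀, fun x hx => hx.1.1⟩
    have hKcl : IsClosed K := by
      refine (hcont.mono ?_).preimage_isClosed_of_isClosed isClosed_Icc isClosed_Ici
      exact fun x hx => ⟨hx.1, lt_of_le_of_lt hx.2 hs.2⟩
    set c := sInf K with hcdef
    have hcK : c ∈ K := hKcl.csInf_mem ⟨s, hKs⟩ hKbdd
    have hct₀ : t₀ < c := by
      rcases lt_or_eq_of_le hcK.1.1 with h' | h'
      · exact h'
      · exfalso; rw [h'] at h0; exact absurd hcK.2 (not_le.2 h0)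
    have hcT : c < T := lt_of_le_of_lt hcK.1.2 hs.2
    have hlt : ∀ x ∈ Set.Ioo t₀ c, w x < -M := by
      intro x hx
      by_contra hge
      push_neg at hge
      have : x ∈ K := ⟨⟨hx.1.le, hx.2.le.trans hcK.1.2⟩, hge⟩
      exact absurd (csInf_le hKbdd this) (not_le.2 hx.2)
    have hftc := intervalIntegral.integral_eq_sub_of_hasDeriv_right_of_le hct₀.le
      (hcont.mono (fun x hx => ⟨hx.1, lt_of_le_of_lt hx.2 hcT⟩))
      (fun x hx => (hD x ⟨hx.1, hx.2.trans hcT⟩).hasDerivWithinAt)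
      (hW'int t₀ c le_rfl hct₀ hcT)
    have hnull : (volume ({t₀, c} : Set ℝ)) = 0 :=
      (Set.toFinite _).measure_zero volume
    have hae2 : ∀ᵐ x : ℝ ∂volume, x ∉ ({t₀, c} : Set ℝ) := measure_eq_zero_iff_ae_notMem.1 hnull
    have hmono : ∫ x in t₀..c, w' x ≤ ∫ x in t₀..c, (0:ℝ) := by
      refine intervalIntegral.integral_mono_ae_restrict hct₀.le (hW'int t₀ c le_rfl hct₀ hcT)
        intervalIntegrable_const ?_
      filter_upwards [ae_restrict_of_ae hub, ae_restrict_of_ae hae2,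
        ae_restrict_mem measurableSet_Icc] with x h1 h2 h3
      have hx1 : t₀ < x := lt_of_le_of_ne h3.1 (fun e => h2 (by simp [e.symm]))
      have hx2 : x < c := lt_of_le_of_ne h3.2 (fun e => h2 (by simp [e]))
      have hxI : x ∈ Set.Ioo t₀ T := ⟨hx1, hx2.trans hcT⟩
      have h4 := abs_le.1 (h1 hxI)
      have h5 : w x < -M := hlt x ⟨hx1, hx2⟩
      have h6 : M ^ 2 ≤ (w x) ^ 2 := by nlinarith
      nlinarith
    rw [hftc] at hmono
    simp only [intervalIntegral.integral_zero] at hmono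
    have : w c ≤ w t₀ := by linarith
    have : w c < -M := lt_of_le_of_lt this h0
    exact absurd hcK.2 (not_le.2 this)
  -- pointwise bound on the derivative of 1/w
  have hpt : ∀ x ∈ Set.Ioo t₀ T, |w' x + (w x) ^ 2| ≤ C ^ 2 →
      1 - ε ≤ -w' x / (w x) ^ 2 ∧ -w' x / (w x) ^ 2 ≤ 1 + ε := by
    intro x hx habs
    have h5 : w x < -M := key x ⟨hx.1.le, hx.2⟩
    have hW2 : M ^ 2 ≤ (w x) ^ 2 := by nlinarith
    have hW2pos : 0 < (w x) ^ 2 := by nlinarith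
    have hεM : C ^ 2 ≤ ε * M ^ 2 := by
      have : ε * (C ^ 2 / ε) = C ^ 2 := mul_div_cancel₀ _ (ne_of_gt hε0)
      nlinarith [sq_nonneg C]
    have hεW : C ^ 2 ≤ ε * (w x) ^ 2 :=
      le_trans hεM (mul_le_mul_of_nonneg_left hW2 hε0.le)
    have h4 := abs_le.1 habs
    constructor
    · rw [le_div_iff₀ hW2pos]
      have hexp : (1 - ε) * (w x) ^ 2 = (w x) ^ 2 - ε * (w x) ^ 2 := by ring
      linarith only [h4.2, hεW, hexp]
    · rw [div_le_iff₀ hW2pos]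
      have hexp : (1 + ε) * (w x) ^ 2 = (w x) ^ 2 + ε * (w x) ^ 2 := by ring
      linarith only [h4.1, hεW, hexp]
  -- Step 2 + 3
  intro t htI
  have htT := htI.2
  set g' : ℝ → ℝ := fun x => -w' x / (w x) ^ 2 with hg'def
  have main : ∀ b ∈ Set.Ioo t T,
      (1 - ε) * (b - t) ≤ (w b)⁻¹ - (w t)⁻¹ ∧ (w b)⁻¹ - (w t)⁻¹ ≤ (1 + ε) * (b - t) := by
    intro b hb
    have hIcc_sub : Set.Icc t b ⊆ Set.Ico t₀ T := fun x hx =>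
      ⟨htI.1.trans hx.1, lt_of_le_of_lt hx.2 hb.2⟩
    have hIoc_sub : Set.Ioc t b ⊆ Set.Ioo t₀ T := fun x hx =>
      ⟨lt_of_le_of_lt htI.1 hx.1, lt_of_le_of_lt hx.2 hb.2⟩
    have hwne : ∀ x ∈ Set.Icc t b, w x ≠ 0 := fun x hx =>
      ne_of_lt (lt_of_lt_of_le (key x (hIcc_sub hx)) (by linarith))
    have hgcont : ContinuousOn (fun x => (w x)⁻¹) (Set.Icc t b) :=
      (hcont.mono hIcc_sub).inv₀ hwne
    have hgderiv : ∀ x ∈ Set.Ioo t b, HasDerivWithinAt (fun y => (w y)⁻¹) (g' x) (Set.Ioi x) x := by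
      intro x hx
      have hxI : x ∈ Set.Ioo t₀ T := ⟨lt_of_le_of_lt htI.1 hx.1, hx.2.trans hb.2⟩
      exact ((hD x hxI).inv (hwne x ⟨hx.1.le, hx.2.le⟩)).hasDerivWithinAt
    -- integrability of g'
    have hints : IntervalIntegrable g' volume t b := by
      rw [intervalIntegrable_iff_integrableOn_Ioc_of_le hb.1.le]
      have hwm : AEMeasurable w (volume.restrict (Set.Ioc t b)) :=
        (hcont.mono (fun x hx => Set.mem_of_mem_of_subset (Set.mem_Ioo.2 (hIoc_sub hx))
          Set.Ioo_subset_Ico_self)).aemeasurable measurableSet_Ioc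
      have haem : AEStronglyMeasurable g' (volume.restrict (Set.Ioc t b)) := by
        have h1 : AEMeasurable (fun x => -deriv w x / (w x) ^ 2)
            (volume.restrict (Set.Ioc t b)) :=
          ((measurable_deriv w).aemeasurable.restrict.neg).div (hwm.pow aemeasurable_const)
        refine h1.aestronglyMeasurable.congr ?_
        refine (ae_restrict_iff' measurableSet_Ioc).2 (ae_of_all _ fun x hx => ?_)
        simp [hg'def, (hD x (hIoc_sub hx)).deriv]
      refine Integrable.mono' (integrable_const 2) haem ?_
      filter_upwards [ae_restrict_of_ae hub, ae_restrict_mem measurableSet_Ioc] with x h1 h2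
      have hx := hIoc_sub h2
      obtain ⟨hl, hr⟩ := hpt x hx (h1 hx)
      rw [Real.norm_eq_abs, abs_le]
      constructor <;> simp only [hg'def] <;> linarith
    have hftc := intervalIntegral.integral_eq_sub_of_hasDeriv_right_of_le hb.1.le
      hgcont hgderiv hints
    have hnull : (volume ({t₀} : Set ℝ)) = 0 := (Set.toFinite _).measure_zero volume
    have hae2 : ∀ᵐ x : ℝ ∂volume, x ∉ ({t₀} : Set ℝ) := measure_eq_zero_iff_ae_notMem.1 hnull
    have hbound : ∀ᵐ x ∂(volume.restrict (Set.Icc t b)),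
        1 - ε ≤ g' x ∧ g' x ≤ 1 + ε := by
      filter_upwards [ae_restrict_of_ae hub, ae_restrict_of_ae hae2,
        ae_restrict_mem measurableSet_Icc] with x h1 h2 h3
      have hxt₀ : t₀ < x := by
        rcases lt_or_eq_of_le (htI.1.trans h3.1) with h' | h'
        · exact h'
        · exact absurd (by simp [h'.symm] : x ∈ ({t₀} : Set ℝ)) h2
      have hxI : x ∈ Set.Ioo t₀ T := ⟨hxt₀, lt_of_le_of_lt h3.2 hb.2⟩
      exact hpt x hxI (h1 hxI)
    constructor
    · have h1 := intervalIntegral.integral_mono_ae_restrict hb.1.le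
        intervalIntegrable_const hints (hbound.mono fun x h => h.1)
      rw [hftc, intervalIntegral.integral_const, smul_eq_mul] at h1
      linarith only [h1]
    · have h1 := intervalIntegral.integral_mono_ae_restrict hb.1.le
        hints intervalIntegrable_const (hbound.mono fun x h => h.2)
      rw [hftc, intervalIntegral.integral_const, smul_eq_mul] at h1
      linarith only [h1]
  -- limits as b → T⁻
  have hne : (nhdsWithin T (Set.Iio T)).NeBot := nhdsLT_neBot T
  have hg0 : Tendsto (fun b => (w b)⁻¹) (nhdsWithin T (Set.Iio T)) (nhds 0) := by
    have h1 : Tendsto (fun b => -(w b)) (nhdsWithin T (Set.Iio T)) atTop :=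
      tendsto_neg_atTop_iff.mpr hblow
    have h2 := h1.inv_tendsto_atTop
    have h3 := h2.neg
    simpa [Pi.inv_apply, inv_neg, neg_neg, neg_zero] using h3
  have hgsub : Tendsto (fun b => (w b)⁻¹ - (w t)⁻¹) (nhdsWithin T (Set.Iio T))
      (nhds (-(w t)⁻¹)) := by
    have := hg0.sub_const ((w t)⁻¹)
    simpa using this
  have hmemIoo : Set.Ioo t T ∈ nhdsWithin T (Set.Iio T) :=
    Ioo_mem_nhdsLT_of_mem ⟨htT, le_refl T⟩
  have hlin : ∀ c : ℝ, Tendsto (fun b => c * (b - t)) (nhdsWithin T (Set.Iio T))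
      (nhds (c * (T - t))) := by
    intro c
    exact (((continuous_const.mul (continuous_id.sub continuous_const)) :
      Continuous fun b : ℝ => c * (b - t)).tendsto T).mono_left nhdsWithin_le_nhds
  have hup : (1 - ε) * (T - t) ≤ -(w t)⁻¹ := by
    refine le_of_tendsto_of_tendsto (hlin (1 - ε)) hgsub ?_
    filter_upwards [hmemIoo] with b hb
    exact (main b hb).1
  have hdown : -(w t)⁻¹ ≤ (1 + ε) * (T - t) := by
    refine le_of_tendsto_of_tendsto hgsub (hlin (1 + ε)) ?_
    filter_upwards [hmemIoo] with b hb
    exact (main b hb).2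
  rw [one_div]
  constructor <;> linarith
end

section
/- Suppose w : [t₀,T) → ℝ is absolutely continuous, C > 0, |w'(t) + w(t)²| ≤ C² a.e., and w(t) → -∞ as t → T. Then lim_{t→T} w(t)(T - t) = -1. -/
open MeasureTheory Filter

/- STATEMENT 5: exact blow-up rate: w(t)(T-t) → -1 as t → T⁻. -/
set_option maxHeartbeats 1000000 in
theorem stmt5 (t₀ T C : ℝ) (ht : t₀ < T) (hC : 0 < C) (w w' : ℝ → ℝ)
    (hw : ∀ t ∈ Set.Ico t₀ T, HasDerivWithinAt w (w' t) (Set.Ico t₀ T) t)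
    (hub : ∀ᵐ t ∂volume, t ∈ Set.Ioo t₀ T → |w' t + (w t) ^ 2| ≤ C ^ 2)
    (hblow : Tendsto w (nhdsWithin T (Set.Iio T)) atBot) :
    Tendsto (fun t => w t * (T - t)) (nhdsWithin T (Set.Iio T)) (nhds (-1)) := by
  -- derivative at interior points
  have hwderiv : ∀ u ∈ Set.Ioo t₀ T, HasDerivAt w (w' u) u := by
    intro u hu
    exact (hw u ⟨hu.1.le, hu.2⟩).hasDerivAt
      (mem_of_superset (isOpen_Ioo.mem_nhds hu) Set.Ioo_subset_Ico_self)
  -- 1/w tends to 0 at T⁻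
  have hy0 : Tendsto (fun s => (w s)⁻¹) (nhdsWithin T (Set.Iio T)) (nhds 0) := by
    have h1 : Tendsto (fun s => -w s) (nhdsWithin T (Set.Iio T)) atTop :=
      tendsto_neg_atBot_atTop.comp hblow
    have h2 := h1.inv_tendsto_atTop
    have h3 := h2.neg
    simpa [inv_neg] using h3
  rw [Metric.tendsto_nhds]
  intro ε hε
  set δ : ℝ := min (1/2) (ε/4) with hδdef
  have hδ0 : 0 < δ := lt_min (by norm_num) (by linarith)
  have hδhalf : δ ≤ 1/2 := min_le_left _ _
  have hδε : δ ≤ ε/4 := min_le_right _ _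
  set M : ℝ := C / Real.sqrt δ with hMdef
  have hM0 : 0 < M := div_pos hC (Real.sqrt_pos.mpr hδ0)
  have hkey : C ^ 2 = δ * M ^ 2 := by
    have hs : Real.sqrt δ ^ 2 = δ := Real.sq_sqrt hδ0.le
    have hsne : Real.sqrt δ ≠ 0 := (Real.sqrt_pos.mpr hδ0).ne'
    rw [hMdef, div_pow, hs]
    field_simp
  -- find t₁ with w < -M on (t₁, T)
  have hev : ∀ᶠ t in nhdsWithin T (Set.Iio T), w t < -M :=
    hblow.eventually (eventually_lt_atBot (-M))
  obtain ⟨a, ha, haM⟩ := mem_nhdsLT_iff_exists_Ioo_subset.mp hev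
  set t₁ : ℝ := max a t₀ with ht₁def
  have ht₁T : t₁ < T := max_lt ha ht
  have hwt : ∀ u ∈ Set.Ioo t₁ T, w u < -M := by
    intro u hu
    exact haM ⟨lt_of_le_of_lt (le_max_left a t₀) hu.1, hu.2⟩
  have hInt : Set.Ioo t₁ T ⊆ Set.Ioo t₀ T := fun u hu =>
    ⟨lt_of_le_of_lt (le_max_right a t₀) hu.1, hu.2⟩
  have hwne : ∀ u ∈ Set.Ioo t₁ T, w u ≠ 0 := by
    intro u hu h0
    have := hwt u hu
    rw [h0] at this; linarith
  have hyderiv : ∀ u ∈ Set.Ioo t₁ T,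
      HasDerivAt (fun x => (w x)⁻¹) (-(w' u) / (w u) ^ 2) u := by
    intro u hu
    exact (hwderiv u (hInt hu)).inv (hwne u hu)
  -- key integral estimate
  have key : ∀ t s, t ∈ Set.Ioo t₁ T → s ∈ Set.Ioo t T →
      |((w s)⁻¹ - (w t)⁻¹) - (s - t)| ≤ δ * (s - t) := by
    intro t s ht' hs'
    have hts : t < s := hs'.1
    have hsub : Set.Icc t s ⊆ Set.Ioo t₁ T := fun u hu =>
      ⟨lt_of_lt_of_le ht'.1 hu.1, lt_of_le_of_lt hu.2 hs'.2⟩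
    have hIoc : Set.uIoc t s = Set.Ioc t s := Set.uIoc_of_le hts.le
    have hIocsub : Set.Ioc t s ⊆ Set.Ioo t₁ T := fun u hu =>
      hsub ⟨hu.1.le, hu.2⟩
    set g : ℝ → ℝ := fun u => -(w' u) / (w u) ^ 2 with hgdef
    have hmeas : MeasurableSet (Set.uIoc t s) := measurableSet_uIoc
    -- pointwise a.e. bound |g - 1| ≤ δ on uIoc t s
    have haebound : ∀ᵐ u ∂volume.restrict (Set.uIoc t s), |g u - 1| ≤ δ := by
      have h1 : ∀ᵐ u ∂volume.restrict (Set.uIoc t s),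
          u ∈ Set.Ioo t₀ T → |w' u + (w u) ^ 2| ≤ C ^ 2 :=
        ae_restrict_of_ae hub
      have h2 := ae_restrict_mem (μ := volume) hmeas
      filter_upwards [h1, h2] with u hr hu
      have huI : u ∈ Set.Ioo t₁ T := hIocsub (hIoc ▸ hu)
      have hrr := hr (hInt huI)
      have hwu : w u < -M := hwt u huI
      have hw2 : M ^ 2 ≤ (w u) ^ 2 := by nlinarith
      have hw2pos : (0:ℝ) < (w u) ^ 2 := by nlinarith
      have heq : g u - 1 = -((w' u + (w u) ^ 2) / (w u) ^ 2) := by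
        simp only [hgdef]
        rw [add_div, div_self hw2pos.ne']
        ring
      rw [heq, abs_neg, abs_div, abs_of_pos hw2pos, div_le_iff₀ hw2pos]
      nlinarith [hrr, hw2, hδ0]
    -- measurability and integrability of g on uIoc t s
    have hwcont : ContinuousOn w (Set.uIoc t s) := by
      intro u hu
      exact ((hwderiv u (hInt (hIocsub (hIoc ▸ hu)))).continuousAt).continuousWithinAt
    have hgm : AEStronglyMeasurable g (volume.restrict (Set.uIoc t s)) := by
      have hG : AEMeasurable (fun u => -(deriv w u) / (w u) ^ 2)
          (volume.restrict (Set.uIoc t s)) :=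
        ((measurable_deriv w).aemeasurable.neg).div
          ((hwcont.aemeasurable hmeas).pow aemeasurable_const)
      have heq : (fun u => -(deriv w u) / (w u) ^ 2) =ᵐ[volume.restrict (Set.uIoc t s)] g := by
        filter_upwards [ae_restrict_mem hmeas] with u hu
        have hd := hwderiv u (hInt (hIocsub (hIoc ▸ hu)))
        simp [hgdef, hd.deriv]
      exact (hG.congr heq).aestronglyMeasurable
    have hinteg : IntervalIntegrable g volume t s := by
      rw [intervalIntegrable_iff]
      haveI : IsFiniteMeasure (volume.restrict (Set.uIoc t s)) := by
        constructor
        rw [Measure.restrict_apply_univ, hIoc]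
        exact measure_Ioc_lt_top
      apply Integrable.mono' (g := fun _ => (1 + δ)) (integrable_const _) hgm
      filter_upwards [haebound] with u hu
      have : |g u| ≤ |g u - 1| + 1 := by
        have h := abs_add_le (g u - 1) 1
        simpa using h
      calc ‖g u‖ = |g u| := rfl
        _ ≤ |g u - 1| + 1 := this
        _ ≤ 1 + δ := by linarith
    have hFTC : ∫ u in t..s, g u = (w s)⁻¹ - (w t)⁻¹ := by
      apply intervalIntegral.integral_eq_sub_of_hasDerivAt
      · intro u hu
        rw [Set.uIcc_of_le hts.le] at hu
        exact hyderiv u (hsub hu)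
      · exact hinteg
    have hconst : IntervalIntegrable (fun _ : ℝ => (1:ℝ)) volume t s :=
      intervalIntegrable_const
    have hsplit : ((w s)⁻¹ - (w t)⁻¹) - (s - t) = ∫ u in t..s, (g u - 1) := by
      rw [intervalIntegral.integral_sub hinteg hconst, hFTC]
      simp
    rw [hsplit]
    have hb := intervalIntegral.norm_integral_le_of_norm_le
      (f := fun u => g u - 1) (g := fun _ => δ) (μ := volume) (a := t) (b := s)
      hts.le (by rw [hIoc] at haebound; exact (ae_restrict_iff' measurableSet_Ioc).mp haebound)
      intervalIntegrable_const
    have : |∫ u in t..s, (δ:ℝ)| = δ * (s - t) := by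
      rw [intervalIntegral.integral_const, smul_eq_mul, abs_mul, abs_of_nonneg hδ0.le,
        abs_of_nonneg (by linarith : (0:ℝ) ≤ s - t), mul_comm]
    calc |∫ u in t..s, (g u - 1)| ≤ |∫ u in t..s, (δ:ℝ)| := hb.trans (le_abs_self _)
      _ = δ * (s - t) := this
  -- take the limit s → T⁻ of the estimate
  have hlimest : ∀ t ∈ Set.Ioo t₁ T, |(0 - (w t)⁻¹) - (T - t)| ≤ δ * (T - t) := by
    intro t ht'
    have hIooT : Set.Ioo t T ∈ nhdsWithin T (Set.Iio T) :=
      Ioo_mem_nhdsLT_of_mem ⟨ht'.2, le_refl T⟩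
    have hf : Tendsto (fun s => |((w s)⁻¹ - (w t)⁻¹) - (s - t)|)
        (nhdsWithin T (Set.Iio T)) (nhds |(0 - (w t)⁻¹) - (T - t)|) := by
      apply Tendsto.abs
      apply Tendsto.sub
      · exact hy0.sub tendsto_const_nhds
      · exact ((continuous_id.sub continuous_const).tendsto T).mono_left nhdsWithin_le_nhds
    have hg : Tendsto (fun s => δ * (s - t)) (nhdsWithin T (Set.Iio T))
        (nhds (δ * (T - t))) :=
      ((continuous_const.mul (continuous_id.sub continuous_const)).tendsto T).mono_left
        nhdsWithin_le_nhds
    refine le_of_tendsto_of_tendsto hf hg ?_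
    filter_upwards [hIooT] with s hs
    exact key t s ht' hs
  -- conclude
  filter_upwards [Ioo_mem_nhdsLT_of_mem (⟨ht₁T, le_refl T⟩ : T ∈ Set.Ioc t₁ T)] with t ht'
  have hP : 0 < T - t := by linarith [ht'.2]
  have hW : w t < -M := hwt t ht'
  have hWne : w t ≠ 0 := hwne t ht'
  have hVW : w t * (w t)⁻¹ = 1 := mul_inv_cancel₀ hWne
  have habs := hlimest t ht'
  rw [abs_le] at habs
  obtain ⟨hlow, hhigh⟩ := habs
  -- habs: -(δ(T-t)) ≤ -(w t)⁻¹ - (T-t) ≤ δ(T-t)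
  set V : ℝ := (w t)⁻¹ with hVdef
  have hV1 : V ≤ -(1 - δ) * (T - t) := by linarith
  have hV2 : -(1 + δ) * (T - t) ≤ V := by linarith
  have hVneg : V < 0 := by nlinarith
  rw [Real.dist_eq]
  have hWl : 0 < -(w t) := by linarith
  -- from hV1 and w t < 0 :  1 = w t * V ≥ w t * (-(1-δ)(T-t)), so -(w t)(T-t)(1-δ) ≤ 1
  have hb1 : -(w t) * (T - t) * (1 - δ) ≤ 1 := by nlinarith
  have hub2 : w t * (T - t) + 1 ≤ ε / 2 := by nlinarith
  have hlb2 : -(ε / 2) ≤ w t * (T - t) + 1 := by nlinarith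
  have : |w t * (T - t) - (-1)| ≤ ε / 2 := by
    rw [abs_le]; constructor <;> [linarith; linarith]
  linarith [this, abs_nonneg (w t * (T - t) - (-1))]
end

section
/- Let M > 0, C ≥ 1 and T > 0 with 2C²T·M₀ < 1 where M₀ > 0. Suppose a sequence of continuous functions yₙ : [0,T] → ℝ≥0 satisfies yₙ₊₁(t) ≤ e^{C∫₀ᵗ yₙ(s)ds}(C·M₀ + C∫₀ᵗ e^{-C∫₀^{t'} yₙ(s)ds} yₙ(t')² dt') and y₀(t) ≤ C·M₀/(1 - 2C²M₀t). Then for all n and all t ∈ [0,T], yₙ(t) ≤ C·M₀/(1 - 2C²M₀t). -/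
/- STATEMENT 15: the uniform-bound induction of the local well-posedness proof:
if yₙ₊₁(t) ≤ e^{C∫₀ᵗyₙ}(C M₀ + C∫₀ᵗ e^{-C∫₀^{t'}yₙ} yₙ(t')² dt') and
y₀(t) ≤ C M₀/(1 - 2C²M₀t), with C ≥ 1 and 2C²T M₀ < 1, then
yₙ(t) ≤ C M₀/(1 - 2C²M₀t) for all n and t ∈ [0,T]. -/
theorem stmt15 (T M₀ C : ℝ) (hT : 0 < T) (hM₀ : 0 < M₀) (hC : 1 ≤ C)
    (hTM : 2 * C ^ 2 * T * M₀ < 1) (y : ℕ → ℝ → ℝ)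
    (hcont : ∀ n, Continuous (y n)) (hpos : ∀ n t, 0 ≤ y n t)
    (hbase : ∀ t ∈ Set.Icc (0:ℝ) T, y 0 t ≤ C * M₀ / (1 - 2 * C ^ 2 * M₀ * t))
    (hrec : ∀ n, ∀ t ∈ Set.Icc (0:ℝ) T,
      y (n + 1) t ≤ Real.exp (C * ∫ s in (0:ℝ)..t, y n s) *
        (C * M₀ + C * ∫ s in (0:ℝ)..t,
          Real.exp (-(C * ∫ τ in (0:ℝ)..s, y n τ)) * (y n s) ^ 2)) :
    ∀ n, ∀ t ∈ Set.Icc (0:ℝ) T, y n t ≤ C * M₀ / (1 - 2 * C ^ 2 * M₀ * t) := by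
  intro n
  induction n with
  | zero => exact hbase
  | succ n ih =>
    intro t ht
    have hyc := hcont n
    -- the primitive F
    set F : ℝ → ℝ := fun u => ∫ s in (0:ℝ)..u, y n s with hFdef
    have hFd : ∀ u : ℝ, HasDerivAt F (y n u) u := fun u =>
      intervalIntegral.integral_hasDerivAt_right (hyc.intervalIntegrable 0 u)
        hyc.aestronglyMeasurable.stronglyMeasurableAtFilter hyc.continuousAt
    have hFc : Continuous F := continuous_iff_continuousAt.mpr fun u => (hFd u).continuousAt
    set E : ℝ → ℝ := fun u => Real.exp (-(C * F u)) with hEdef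
    have hEd : ∀ u : ℝ, HasDerivAt E (Real.exp (-(C * F u)) * (-(C * y n u))) u := fun u =>
      (((hFd u).const_mul C).neg).exp
    have hEc : Continuous E := Real.continuous_exp.comp ((continuous_const.mul hFc).neg)
    set h : ℝ → ℝ := fun s => E s * (y n s) ^ 2 with hhdef
    have hhc : Continuous h := hEc.mul (hyc.pow 2)
    set J : ℝ → ℝ := fun u => ∫ s in (0:ℝ)..u, h s with hJdef
    have hJd : ∀ u : ℝ, HasDerivAt J (h u) u := fun u =>
      intervalIntegral.integral_hasDerivAt_right (hhc.intervalIntegrable 0 u)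
        hhc.aestronglyMeasurable.stronglyMeasurableAtFilter hhc.continuousAt
    set a : ℝ := 2 * C ^ 2 * M₀ with hadef
    have ha0 : (0:ℝ) < a := by positivity
    have hden : ∀ u ∈ Set.Icc (0:ℝ) T, (0:ℝ) < 1 - a * u := by
      intro u hu
      have h1 : a * u ≤ a * T := mul_le_mul_of_nonneg_left hu.2 ha0.le
      have h2 : a * T < 1 := by rw [hadef]; nlinarith
      linarith
    set g : ℝ → ℝ := fun u => C * M₀ / (1 - a * u) with hgdef
    have hgd : ∀ u ∈ Set.Icc (0:ℝ) T, HasDerivAt g (C * M₀ * a / (1 - a * u) ^ 2) u := by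
      intro u hu
      have hd : HasDerivAt (fun v : ℝ => 1 - a * v) (-a) u := by
        simpa using ((hasDerivAt_id u).const_mul a).const_sub 1
      have h2 := (hasDerivAt_const u (C * M₀)).div hd (ne_of_gt (hden u hu))
      exact h2.congr_deriv (by ring)
    set φ : ℝ → ℝ := fun u => E u * g u - C * J u with hphidef
    have hphid : ∀ u ∈ Set.Icc (0:ℝ) T,
        HasDerivAt φ (Real.exp (-(C * F u)) * (-(C * y n u)) * g u +
          E u * (C * M₀ * a / (1 - a * u) ^ 2) - C * h u) u := by
      intro u hu
      exact ((hEd u).mul (hgd u hu)).sub ((hJd u).const_mul C)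
    have hderiv_nonneg : ∀ u ∈ Set.Icc (0:ℝ) T,
        0 ≤ Real.exp (-(C * F u)) * (-(C * y n u)) * g u +
          E u * (C * M₀ * a / (1 - a * u) ^ 2) - C * h u := by
      intro u hu
      have hd := hden u hu
      have hE0 : (0:ℝ) < E u := Real.exp_pos _
      have hy0 : 0 ≤ y n u := hpos n u
      have hyg : y n u ≤ C * M₀ / (1 - a * u) := ih u hu
      have hgu : g u = C * M₀ / (1 - a * u) := rfl
      have hC0 : (0:ℝ) < C := lt_of_lt_of_le zero_lt_one hC
      have hkey : C * y n u * g u + C * (y n u) ^ 2 ≤ C * M₀ * a / (1 - a * u) ^ 2 := by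
        rw [hgu]
        have hG0 : 0 ≤ C * M₀ / (1 - a * u) := by positivity
        have heq : C * M₀ * a / (1 - a * u) ^ 2 =
            2 * C * (C * M₀ / (1 - a * u)) ^ 2 := by
          rw [hadef]; field_simp
        rw [heq]
        have h1 : y n u * (C * M₀ / (1 - a * u)) ≤
            (C * M₀ / (1 - a * u)) * (C * M₀ / (1 - a * u)) :=
          mul_le_mul_of_nonneg_right hyg hG0
        have h2 : y n u ^ 2 ≤ (C * M₀ / (1 - a * u)) ^ 2 := by nlinarith
        nlinarith [mul_le_mul_of_nonneg_left h1 hC0.le, mul_le_mul_of_nonneg_left h2 hC0.le]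
      show 0 ≤ E u * (-(C * y n u)) * g u +
          E u * (C * M₀ * a / (1 - a * u) ^ 2) - C * (E u * (y n u) ^ 2)
      have hfact : E u * (-(C * y n u)) * g u +
          E u * (C * M₀ * a / (1 - a * u) ^ 2) - C * (E u * (y n u) ^ 2) =
          E u * (C * M₀ * a / (1 - a * u) ^ 2 - (C * y n u * g u + C * (y n u) ^ 2)) := by
        ring
      rw [hfact]
      exact mul_nonneg hE0.le (by linarith)
    have hmono : MonotoneOn φ (Set.Icc 0 T) := by
      apply monotoneOn_of_deriv_nonneg (convex_Icc 0 T)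
      · intro u hu
        exact ((hphid u hu).continuousAt).continuousWithinAt
      · intro u hu
        rw [interior_Icc] at hu
        exact ((hphid u (Set.mem_Icc_of_Ioo hu)).differentiableAt).differentiableWithinAt
      · intro u hu
        rw [interior_Icc] at hu
        rw [(hphid u (Set.mem_Icc_of_Ioo hu)).deriv]
        exact hderiv_nonneg u (Set.mem_Icc_of_Ioo hu)
    have h0mem : (0:ℝ) ∈ Set.Icc (0:ℝ) T := ⟨le_refl 0, hT.le⟩
    have hφ0 : φ 0 = C * M₀ := by
      have hF0 : F 0 = 0 := intervalIntegral.integral_same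
      have hJ0 : J 0 = 0 := intervalIntegral.integral_same
      simp [hphidef, hEdef, hgdef, hF0, hJ0]
    have hφt := hmono h0mem ht ht.1
    rw [hφ0] at hφt
    -- key inequality: C*M₀ + C*J t ≤ E t * g t
    have hφt' : φ t = E t * g t - C * J t := rfl
    rw [hφt'] at hφt
    have hkey2 : C * M₀ + C * J t ≤ E t * g t := by linarith
    have hexp : (0:ℝ) < Real.exp (C * F t) := Real.exp_pos _
    have hstep := mul_le_mul_of_nonneg_left hkey2 hexp.le
    have hEt : Real.exp (C * F t) * (E t * g t) = g t := by
      rw [hEdef]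
      rw [← mul_assoc, ← Real.exp_add]
      simp
    rw [hEt] at hstep
    have hrec' := hrec n t ht
    have hmatch : Real.exp (C * ∫ s in (0:ℝ)..t, y n s) *
        (C * M₀ + C * ∫ s in (0:ℝ)..t,
          Real.exp (-(C * ∫ τ in (0:ℝ)..s, y n τ)) * (y n s) ^ 2) =
        Real.exp (C * F t) * (C * M₀ + C * J t) := rfl
    rw [hmatch] at hrec'
    have hgoal : g t = C * M₀ / (1 - 2 * C ^ 2 * M₀ * t) := rfl
    calc y (n + 1) t ≤ Real.exp (C * F t) * (C * M₀ + C * J t) := hrec'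
      _ ≤ g t := hstep
      _ = C * M₀ / (1 - 2 * C ^ 2 * M₀ * t) := hgoal
end

section
/- Let T > 0 and u ∈ C¹([0,T]; H²(ℝ)). Then for every t ∈ [0,T) there exists ξ(t) ∈ ℝ with m(t) := inf_{x∈ℝ} u_x(t,x) = u_x(t, ξ(t)); moreover m is absolutely continuous on (0,T) and m'(t) = u_{tx}(t, ξ(t)) for a.e. t ∈ (0,T). -/
open MeasureTheory
open Filter Set Topology

-- if g nonneg integrable and tends to L at atTop then L ≤ 0 (hence =0 when nonneg)
lemma limit_zero_of_integrable {g : ℝ → ℝ} (hg : Integrable g volume)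
    {L : ℝ} (hL : Tendsto g atTop (𝓝 L)) (hpos : 0 < L) : False := by
  have hev : ∀ᶠ x in atTop, L/2 ≤ g x := hL.eventually (eventually_ge_nhds (by linarith))
  obtain ⟨a, ha⟩ := hev.exists_forall_of_atTop
  have hint : IntegrableOn (fun _ : ℝ => L/2) (Ici a) volume := by
    refine Integrable.mono (hg.restrict) aestronglyMeasurable_const ?_
    refine (ae_restrict_iff' measurableSet_Ici).2 (ae_of_all _ fun x hx => ?_)
    have := ha x hx
    rw [Real.norm_eq_abs, Real.norm_eq_abs]
    rw [abs_of_pos (by linarith), abs_of_pos (by linarith : (0:ℝ) < g x)]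
    exact this
  rw [integrableOn_const_iff] at hint
  rcases hint with h | h
  · simp at h; linarith
  · exact absurd h (by simp [Real.volume_Ici])

lemma limit_zero_of_integrable_bot {g : ℝ → ℝ} (hg : Integrable g volume)
    {L : ℝ} (hL : Tendsto g atBot (𝓝 L)) (hpos : 0 < L) : False := by
  have hev : ∀ᶠ x in atBot, L/2 ≤ g x := hL.eventually (eventually_ge_nhds (by linarith))
  obtain ⟨a, ha⟩ := hev.exists_forall_of_atBot
  have hint : IntegrableOn (fun _ : ℝ => L/2) (Iic a) volume := by
    refine Integrable.mono (hg.restrict) aestronglyMeasurable_const ?_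
    refine (ae_restrict_iff' measurableSet_Iic).2 (ae_of_all _ fun x hx => ?_)
    have := ha x hx
    rw [Real.norm_eq_abs, Real.norm_eq_abs]
    rw [abs_of_pos (by linarith), abs_of_pos (by linarith : (0:ℝ) < g x)]
    exact this
  rw [integrableOn_const_iff] at hint
  rcases hint with h | h
  · simp at h; linarith
  · exact absurd h (by simp [Real.volume_Iic])

lemma decay (f : ℝ → ℝ) (hf : ContDiff ℝ 1 f) (h2 : MemLp f 2 volume)
    (h2' : MemLp (deriv f) 2 volume) :
    Tendsto f atTop (𝓝 0) ∧ Tendsto f atBot (𝓝 0) := by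
  set g : ℝ → ℝ := fun x => f x ^ 2 with hgdef
  set h : ℝ → ℝ := fun x => 2 * f x * deriv f x with hhdef
  have hdg : ∀ x, HasDerivAt g (h x) x := by
    intro x
    have := ((hf.differentiable one_ne_zero) x).hasDerivAt.fun_pow 2
    simpa [hhdef, mul_comm, mul_assoc, mul_left_comm] using this
  have hginteg : Integrable g volume := h2.integrable_sq
  have hg'integ : Integrable (fun x => deriv f x ^ 2) volume := h2'.integrable_sq
  have hderivcont : Continuous (deriv f) := hf.continuous_deriv le_rfl
  have hhinteg : Integrable h volume := by
    refine Integrable.mono' (hginteg.add hg'integ) ?_ (ae_of_all _ fun x => ?_)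
    · exact (((continuous_const.mul hf.continuous).mul hderivcont)).aestronglyMeasurable
    · rw [Real.norm_eq_abs, hhdef]
      rcases abs_cases (2 * f x * deriv f x) with ⟨he, _⟩ | ⟨he, _⟩ <;>
        simp only [hgdef, hhdef, he, Pi.add_apply] <;> nlinarith [sq_nonneg (f x - deriv f x), sq_nonneg (f x + deriv f x)]

  have hftc : ∀ a b : ℝ, ∫ x in a..b, h x = g b - g a := by
    intro a b
    exact intervalIntegral.integral_eq_sub_of_hasDerivAt (fun t _ => hdg t)
      (hhinteg.intervalIntegrable)
  have key : ∀ (l : Filter ℝ), l.NeBot → (∃ L, Tendsto g l (𝓝 L)) →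
      (∀ L, Tendsto g l (𝓝 L) → 0 < L → False) → Tendsto f l (𝓝 0) := by
    intro l hne ⟨L, hL⟩ hcon
    have hL0 : L = 0 := by
      have h1 : 0 ≤ L := ge_of_tendsto' hL (fun x => sq_nonneg (f x))
      rcases lt_or_eq_of_le h1 with hlt | heq
      · exact absurd (hcon L hL hlt) not_false
      · exact heq.symm
    rw [hL0] at hL
    have habs : Tendsto (fun x => |f x|) l (𝓝 0) := by
      have := (Real.continuous_sqrt.tendsto 0).comp hL
      simpa [Function.comp_def, hgdef, Real.sqrt_sq_eq_abs] using this
    exact tendsto_of_tendsto_of_tendsto_of_le_of_le (by simpa using habs.neg)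
      habs (fun x => neg_abs_le _) (fun x => le_abs_self _)
  constructor
  · have hlim : Tendsto g atTop (𝓝 (g 0 + ∫ x in Ioi 0, h x)) := by
      have h1 : Tendsto (fun b => ∫ x in (0:ℝ)..b, h x) atTop (𝓝 (∫ x in Ioi 0, h x)) :=
        intervalIntegral_tendsto_integral_Ioi 0 hhinteg.integrableOn tendsto_id
      have heq : (fun b => g 0 + ∫ x in (0:ℝ)..b, h x) = g := by
        funext b; rw [hftc 0 b]; ring
      have h2 := (tendsto_const_nhds (x := g 0)).add h1
      rwa [heq] at h2
    exact key atTop inferInstance ⟨_, hlim⟩ (fun L hL => limit_zero_of_integrable hginteg hL)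
  · have hlim : Tendsto g atBot (𝓝 (g 0 - ∫ x in Iic 0, h x)) := by
      have h1 : Tendsto (fun a => ∫ x in a..(0:ℝ), h x) atBot (𝓝 (∫ x in Iic 0, h x)) :=
        intervalIntegral_tendsto_integral_Iic 0 hhinteg.integrableOn tendsto_id
      have heq : (fun a => g 0 - ∫ x in a..(0:ℝ), h x) = g := by
        funext a; rw [hftc a 0]; ring
      have h2 := (tendsto_const_nhds (x := g 0)).sub h1
      rwa [heq] at h2
    exact key atBot inferInstance ⟨_, hlim⟩ (fun L hL => limit_zero_of_integrable_bot hginteg hL)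

lemma attains_min (f : ℝ → ℝ) (hc : Continuous f) (ht : Tendsto f atTop (𝓝 0))
    (hb : Tendsto f atBot (𝓝 0)) (h0 : ∃ c, f c ≤ 0) : ∃ ξ, ∀ x, f ξ ≤ f x := by
  obtain ⟨c, hc0⟩ := h0
  by_cases hmin : ∀ x, f c ≤ f x
  · exact ⟨c, hmin⟩
  push_neg at hmin
  obtain ⟨c', hc'⟩ := hmin
  have hneg : f c' < 0 := lt_of_lt_of_le hc' hc0
  obtain ⟨R₁, hR₁⟩ := (ht.eventually (eventually_gt_nhds hneg)).exists_forall_of_atTop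
  obtain ⟨R₂, hR₂⟩ := (hb.eventually (eventually_gt_nhds hneg)).exists_forall_of_atBot
  set a := min R₂ c'
  set b := max R₁ c'
  have hab : a ≤ b := le_trans (min_le_right _ _) (le_max_right _ _)
  obtain ⟨ξ, hξmem, hξ⟩ := isCompact_Icc.exists_isMinOn (Set.nonempty_Icc.2 hab)
    (hc.continuousOn)
  refine ⟨ξ, fun x => ?_⟩
  by_cases hx : x ∈ Set.Icc a b
  · exact hξ hx
  · have hfc' : f ξ ≤ f c' := hξ ⟨min_le_right _ _, le_max_right _ _⟩
    simp only [Set.mem_Icc, not_and_or, not_le] at hx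
    rcases hx with hx | hx
    · exact hfc'.trans (hR₂ x (le_trans hx.le (min_le_left _ _))).le
    · exact hfc'.trans (hR₁ x (le_trans (le_max_left _ _) hx.le)).le

lemma exists_nonpos (v : ℝ → ℝ) (hv : Differentiable ℝ v)
    (hut : Tendsto v atTop (𝓝 0)) (hub : Tendsto v atBot (𝓝 0)) :
    ∃ c, deriv v c ≤ 0 := by
  by_contra hcon
  push_neg at hcon
  have hmono : StrictMono v := strictMono_of_deriv_pos hcon
  have h1 : v 1 ≤ 0 := hmono.monotone.ge_of_tendsto hut 1
  have h2 : 0 ≤ v 0 := hmono.monotone.le_of_tendsto hub 0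
  have := hmono (show (0:ℝ) < 1 by norm_num)
  linarith


/- STATEMENT 18 (Constantin–Escher lemma): for u ∈ C¹([0,T]; H²(ℝ)) (encoded by classical
regularity in x, L² conditions on u, u_x, u_xx, and a jointly continuous, bounded time
derivative utx of u_x), for every t ∈ [0,T) the infimum m(t) = inf_x u_x(t,x) is attained
at some ξ(t), m is (absolutely) continuous and m'(t) = u_{tx}(t, ξ(t)) a.e. on (0,T). -/
theorem stmt18 (T : ℝ) (hT : 0 < T) (u utx : ℝ → ℝ → ℝ)
    (hreg : ∀ t ∈ Set.Icc (0:ℝ) T, ContDiff ℝ 2 (u t))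
    (hL2 : ∀ t ∈ Set.Icc (0:ℝ) T,
      MemLp (u t) 2 volume ∧ MemLp (deriv (u t)) 2 volume ∧
        MemLp (deriv (deriv (u t))) 2 volume)
    (hutx_cont : Continuous (fun p : ℝ × ℝ => utx p.1 p.2))
    (hd : ∀ x : ℝ, ∀ t ∈ Set.Icc (0:ℝ) T, HasDerivAt (fun s => deriv (u s) x) (utx t x) t)
    (hB : ∃ B, ∀ t ∈ Set.Icc (0:ℝ) T, ∀ x, |utx t x| ≤ B) :
    ∃ ξ : ℝ → ℝ,
      (∀ t ∈ Set.Ico (0:ℝ) T, deriv (u t) (ξ t) = ⨅ x : ℝ, deriv (u t) x) ∧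
      ContinuousOn (fun t => ⨅ x : ℝ, deriv (u t) x) (Set.Ico 0 T) ∧
      ∀ᵐ t ∂(volume.restrict (Set.Ioo 0 T)),
        HasDerivAt (fun s => ⨅ x : ℝ, deriv (u s) x) (utx t (ξ t)) t := by
  obtain ⟨B, hB⟩ := hB
  have hB0 : 0 ≤ B := le_trans (abs_nonneg _) (hB 0 ⟨le_refl 0, hT.le⟩ 0)
  have hattain : ∀ t ∈ Set.Icc (0:ℝ) T, ∃ ξ, ∀ x, deriv (u t) ξ ≤ deriv (u t) x := by
    intro t ht
    obtain ⟨hL2u, hL2u', hL2u''⟩ := hL2 t ht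
    have hreg2 := hreg t ht
    have hreg1 : ContDiff ℝ 1 (u t) := hreg2.of_le (by norm_num)
    have hderivC1 : ContDiff ℝ 1 (deriv (u t)) := by
      have h2 : ContDiff ℝ ((1:WithTop ℕ∞) + 1) (u t) := by
        convert hreg2 using 2
        norm_num
      exact (contDiff_succ_iff_deriv.mp h2).2.2
    have hdecu := decay (u t) hreg1 hL2u hL2u'
    have hdecu' := decay (deriv (u t)) hderivC1 hL2u' hL2u''
    exact attains_min _ hderivC1.continuous hdecu'.1 hdecu'.2
      (exists_nonpos (u t) (hreg1.differentiable one_ne_zero) hdecu.1 hdecu.2)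
  choose ξ0 hξ0 using hattain
  classical
  set ξ : ℝ → ℝ := fun t => if h : t ∈ Set.Icc (0:ℝ) T then ξ0 t h else 0 with hξdef
  have hξ : ∀ t (ht : t ∈ Set.Icc (0:ℝ) T), ∀ x, deriv (u t) (ξ t) ≤ deriv (u t) x := by
    intro t ht x
    simp only [hξdef, dif_pos ht]
    exact hξ0 t ht x
  set m : ℝ → ℝ := fun t => ⨅ x, deriv (u t) x with hm
  have hbdd : ∀ t ∈ Set.Icc (0:ℝ) T, BddBelow (Set.range (deriv (u t))) := by
    intro t ht
    exact ⟨deriv (u t) (ξ t), Set.forall_mem_range.2 (hξ t ht)⟩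
  have hmeq : ∀ t (ht : t ∈ Set.Icc (0:ℝ) T), m t = deriv (u t) (ξ t) :=
    fun t ht => le_antisymm (ciInf_le (hbdd t ht) (ξ t)) (le_ciInf (hξ t ht))
  have hLip : ∀ x : ℝ, ∀ s ∈ Set.Icc (0:ℝ) T, ∀ t ∈ Set.Icc (0:ℝ) T,
      |deriv (u t) x - deriv (u s) x| ≤ B * |t - s| := by
    intro x s hs t ht
    have := (convex_Icc (0:ℝ) T).norm_image_sub_le_of_norm_hasDerivWithin_le
      (f := fun τ => deriv (u τ) x) (f' := fun τ => utx τ x)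
      (fun τ hτ => (hd x τ hτ).hasDerivWithinAt)
      (fun τ hτ => by simpa [Real.norm_eq_abs] using hB τ hτ x) hs ht
    simpa [Real.norm_eq_abs, Real.dist_eq] using this
  have key : ∀ s ∈ Set.Icc (0:ℝ) T, ∀ t ∈ Set.Icc (0:ℝ) T, m t - m s ≤ B * |t - s| := by
    intro s hs t ht
    have h1 : m t ≤ deriv (u t) (ξ s) := ciInf_le (hbdd t ht) (ξ s)
    have h2 : deriv (u t) (ξ s) - deriv (u s) (ξ s) ≤ B * |t - s| :=
      le_trans (le_abs_self _) (hLip (ξ s) s hs t ht)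
    rw [hmeq s hs]
    linarith
  have hmLipOn : LipschitzOnWith (Real.toNNReal B) m (Set.Icc 0 T) := by
    rw [lipschitzOnWith_iff_dist_le_mul]
    intro t ht s hs
    rw [Real.dist_eq, Real.dist_eq, Real.coe_toNNReal B hB0]
    rw [abs_le]
    constructor
    · have := key t ht s hs
      rw [abs_sub_comm] at this
      linarith
    · exact key s hs t ht
  obtain ⟨g, hgLip, hgeq⟩ := hmLipOn.extend_real
  refine ⟨ξ, ?_, ?_, ?_⟩
  · intro t ht
    exact (hmeq t (Set.Ico_subset_Icc_self ht)).symm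
  · exact hmLipOn.continuousOn.mono Set.Ico_subset_Icc_self
  · rw [ae_restrict_iff' measurableSet_Ioo]
    filter_upwards [hgLip.ae_differentiableAt (μ := volume)] with t hdiff htmem
    have htIcc : t ∈ Set.Icc (0:ℝ) T := Set.Ioo_subset_Icc_self htmem
    have hnbhd : Set.Icc (0:ℝ) T ∈ 𝓝 t := Icc_mem_nhds htmem.1 htmem.2
    have hev : m =ᶠ[𝓝 t] g := eventually_of_mem hnbhd (fun s hs => hgeq hs)
    have hmder : HasDerivAt m (deriv g t) t := hdiff.hasDerivAt.congr_of_eventuallyEq hev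
    set φ : ℝ → ℝ := fun s => deriv (u s) (ξ t) - m s with hφ
    have hφmin : IsLocalMin φ t := by
      refine eventually_of_mem hnbhd (fun s hs => ?_)
      have h1 : m s ≤ deriv (u s) (ξ t) := ciInf_le (hbdd s hs) (ξ t)
      have h2 : m t = deriv (u t) (ξ t) := hmeq t htIcc
      simp only [hφ]
      linarith
    have hφder : HasDerivAt φ (utx t (ξ t) - deriv g t) t := (hd (ξ t) t htIcc).sub hmder
    have hz := hφmin.hasDerivAt_eq_zero hφder
    have heq : utx t (ξ t) = deriv g t := by linarith
    rw [heq]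
    exact hmder
end
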